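/- Let S be a tree on ℕ and let v(S) := {τ ∈ List Bool : w(τ) ∈ S} be its binary translation. Then v(S) is a binary tree; for every p : ℕ → ℕ, p ∈ [S] if and only if v(p) ∈ [v(S)]; every path of v(S) either has only finitely many ones or equals v(p) for some p ∈ [S]; and consequently [v(S)] is countable if and only if [S] is countable. -/

import Mathlib

/-- A tree (over an alphabet `α`) is a nonempty set of finite sequences closed under
taking prefixes. -/
def IsTree {α : Type*} (T : Set (List α)) : Prop :=
  T.Nonempty ∧ ∀ σ ∈ T, ∀ τ : List α, τ <+: σ → τ ∈ T

/-- The body of a tree: the set of infinite sequences all of whose finite initial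
segments belong to `T`. -/
def body {α : Type*} (T : Set (List α)) : Set (ℕ → α) :=
  {f | ∀ n : ℕ, List.ofFn (fun i : Fin n => f i) ∈ T}

/-- The translation of a finite sequence `τ ∈ List Bool` to a finite sequence of naturals:
`w τ` is the unique `σ ∈ List ℕ` whose translation `0^{σ 0} 1 0^{σ 1} 1 ⋯ 0^{σ (n-1)} 1`
equals the prefix of `τ` up to and including its last `1` (`w τ = ⟨⟩` if `τ` has no `1`). -/
def wList : List Bool → List ℕ
  | [] => []
  | false :: τ =>
      match wList τ with
      | [] => []
      | n :: σ => (n + 1) :: σ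
  | true :: τ => 0 :: wList τ

open Classical in
/-- The translation `v : (ℕ → ℕ) → (ℕ → Bool)` mapping `p` to the binary sequence
`0^{p 0} 1 0^{p 1} 1 0^{p 2} 1 ⋯`; that is, `v p k = true` iff
`k = p 0 + p 1 + ⋯ + p m + m` for some `m`. -/
noncomputable def vSeq (p : ℕ → ℕ) : ℕ → Bool :=
  fun k => decide (∃ m : ℕ, k = (Finset.range (m + 1)).sum p + m)

namespace BinTrans

def sPart (p : ℕ → ℕ) (m : ℕ) : ℕ := (Finset.range (m + 1)).sum p + m

lemma sPart_zero (p : ℕ → ℕ) : sPart p 0 = p 0 := by simp [sPart]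

lemma sPart_succ (p : ℕ → ℕ) (m : ℕ) : sPart p (m + 1) = sPart p m + p (m + 1) + 1 := by
  simp [sPart, Finset.sum_range_succ]; ring

lemma sPart_strictMono (p : ℕ → ℕ) : StrictMono (sPart p) :=
  strictMono_nat_of_lt_succ fun n => by rw [sPart_succ]; omega

lemma sPart_ge (p : ℕ → ℕ) (m : ℕ) : m ≤ sPart p m := by simp [sPart]

open Classical in
lemma vSeq_eq (p : ℕ → ℕ) (k : ℕ) : vSeq p k = decide (∃ m, k = sPart p m) := rfl

lemma vSeq_true (p : ℕ → ℕ) (m : ℕ) : vSeq p (sPart p m) = true := by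
  simp only [vSeq_eq, decide_eq_true_eq]; exact ⟨m, rfl⟩

lemma vSeq_false (p : ℕ → ℕ) {k : ℕ} (h : ∀ m, k ≠ sPart p m) : vSeq p k = false := by
  simp only [vSeq_eq, decide_eq_false_iff_not]
  rintro ⟨m, rfl⟩; exact h m rfl

def vList (σ : List ℕ) : List Bool := σ.flatMap fun n => List.replicate n false ++ [true]

lemma wList_replicate_true (n : ℕ) (τ : List Bool) :
    wList (List.replicate n false ++ true :: τ) = n :: wList τ := by
  induction n with
  | zero => simp [wList]
  | succ n ih => simp [List.replicate_succ, wList, ih]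

lemma wList_vList (σ : List ℕ) : wList (vList σ) = σ := by
  induction σ with
  | nil => rfl
  | cons n σ ih =>
    simp only [vList, List.flatMap_cons, List.append_assoc, List.singleton_append]
    rw [wList_replicate_true]
    exact congrArg (n :: ·) ih

lemma wList_prefix : ∀ (τ ρ : List Bool), wList τ <+: wList (τ ++ ρ)
  | [], ρ => List.nil_prefix
  | true :: τ, ρ => by
      obtain ⟨t, ht⟩ := wList_prefix τ ρ
      rw [List.cons_append]
      show 0 :: wList τ <+: 0 :: wList (τ ++ ρ)
      exact ⟨t, by rw [List.cons_append, ht]⟩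
  | false :: τ, ρ => by
      obtain ⟨t, ht⟩ := wList_prefix τ ρ
      rw [List.cons_append]
      cases hw : wList τ with
      | nil => show (match wList τ with | [] => [] | n :: σ => (n+1)::σ) <+: _
               rw [hw]; exact List.nil_prefix
      | cons n σ' =>
          rw [hw] at ht
          show (match wList τ with | [] => [] | n :: σ => (n+1)::σ) <+:
               (match wList (τ ++ ρ) with | [] => [] | n :: σ => (n+1)::σ)
          rw [hw, ← ht, List.cons_append]
          exact ⟨t, rfl⟩

lemma ofFn_coe_congr {α : Type*} (f : ℕ → α) {a b : ℕ} (h : a = b) :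
    List.ofFn (fun i : Fin a => f i) = List.ofFn (fun i : Fin b => f i) := by subst h; rfl

lemma ofFn_f_prefix {α : Type*} (f : ℕ → α) {n m : ℕ} (h : n ≤ m) :
    List.ofFn (fun i : Fin n => f i) <+: List.ofFn (fun i : Fin m => f i) := by
  have : List.ofFn (fun i : Fin n => f i) = (List.ofFn (fun i : Fin m => f i)).take n := by
    apply List.ext_getElem
    · simp [h]
    · intro i h1 h2; simp
  rw [this]; exact List.take_prefix _ _

lemma ofFn_block {n : ℕ} {f : Fin (n + 1) → Bool}
    (h1 : ∀ i : Fin (n + 1), (i : ℕ) < n → f i = false) (h2 : f (Fin.last n) = true) :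
    List.ofFn f = List.replicate n false ++ [true] := by
  apply List.ext_getElem
  · simp
  · intro i hi1 hi2
    simp only [List.length_ofFn] at hi1
    rw [List.getElem_ofFn]
    rcases Nat.lt_or_ge i n with h | h
    · rw [List.getElem_append_left (by simpa using h), List.getElem_replicate]
      exact h1 _ h
    · have hin : i = n := by omega
      rw [List.getElem_append_right (by simpa using h)]
      simp only [List.length_replicate]
      have : f ⟨i, hi1⟩ = f (Fin.last n) := by congr 1; ext; simpa using hin
      rw [this, h2]
      simp [hin]

lemma ofFn_vSeq_block (p : ℕ → ℕ) (m : ℕ) :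
    List.ofFn (fun i : Fin (sPart p m + 1) => vSeq p i) =
      vList (List.ofFn fun i : Fin (m + 1) => p i) := by
  induction m with
  | zero =>
    have hv : vList (List.ofFn fun i : Fin 1 => p i) = List.replicate (sPart p 0) false ++ [true] := by
      simp [vList, sPart_zero]
    rw [hv]
    apply ofFn_block
    · intro i hi
      apply vSeq_false
      intro j hj
      have hmono := (sPart_strictMono p).monotone (Nat.zero_le j)
      omega
    · exact vSeq_true p 0
  | succ m ih =>
    have hlen : sPart p (m + 1) + 1 = (sPart p m + 1) + (p (m + 1) + 1) := by
      rw [sPart_succ]; ring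
    rw [ofFn_coe_congr (fun k => vSeq p k) hlen, List.ofFn_add]
    have h1 : (List.ofFn fun i : Fin (sPart p m + 1) =>
        vSeq p ((Fin.castLE (Nat.le_add_right (sPart p m + 1) (p (m + 1) + 1)) i : ℕ))) =
        List.ofFn (fun i : Fin (sPart p m + 1) => vSeq p i) := by
      simp [Fin.coe_castLE]
    have h2 : (List.ofFn fun j : Fin (p (m + 1) + 1) =>
        vSeq p ((Fin.natAdd (sPart p m + 1) j : ℕ))) =
        List.replicate (p (m + 1)) false ++ [true] := by
      apply ofFn_block
      · intro j hj
        apply vSeq_false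
        intro a ha
        simp only [Fin.coe_natAdd] at ha
        rcases Nat.lt_or_ge a (m + 1) with h | h
        · have := (sPart_strictMono p).monotone (Nat.lt_succ_iff.mp h)
          omega
        · have := (sPart_strictMono p).monotone h
          rw [sPart_succ] at this
          omega
      · have : ((Fin.natAdd (sPart p m + 1) (Fin.last (p (m + 1)))) : ℕ) = sPart p (m + 1) := by
          simp only [Fin.coe_natAdd, Fin.val_last, sPart_succ]; omega
        rw [this]
        exact vSeq_true p (m + 1)
    rw [h1, h2, ih]
    have hrhs : vList (List.ofFn fun i : Fin (m + 1 + 1) => p i) =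
        vList (List.ofFn fun i : Fin (m + 1) => p i) ++
          (List.replicate (p (m + 1)) false ++ [true]) := by
      rw [List.ofFn_succ']
      simp only [List.concat_eq_append, vList, List.flatMap_append]
      congr 1
      simp [Fin.val_last]
    rw [hrhs]

end BinTrans

open BinTrans in
/-- For a tree `S` on `ℕ`, its binary translation `v S = {τ : List Bool | w τ ∈ S}` is a
binary tree; `p ∈ [S]` iff `v p ∈ [v S]`; every path of `v S` has finitely many ones or
equals `v p` for some `p ∈ [S]`; and `[v S]` is countable iff `[S]` is countable. -/
theorem binaryTranslation_spec {S : Set (List ℕ)} (hS : IsTree S) :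
    IsTree {τ : List Bool | wList τ ∈ S} ∧
    (∀ p : ℕ → ℕ, p ∈ body S ↔ vSeq p ∈ body {τ : List Bool | wList τ ∈ S}) ∧
    (∀ q ∈ body {τ : List Bool | wList τ ∈ S},
      {k : ℕ | q k = true}.Finite ∨ ∃ p ∈ body S, q = vSeq p) ∧
    ((body {τ : List Bool | wList τ ∈ S}).Countable ↔ (body S).Countable) := by
  obtain ⟨⟨σ0, hσ0⟩, hcl⟩ := hS
  have hempty : ([] : List ℕ) ∈ S := hcl σ0 hσ0 [] List.nil_prefix
  -- Part 1
  have part1 : IsTree {τ : List Bool | wList τ ∈ S} := by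
    refine ⟨⟨[], by simpa [wList] using hempty⟩, ?_⟩
    intro σ hσ τ hτ
    obtain ⟨ρ, rfl⟩ := hτ
    exact hcl _ hσ _ (wList_prefix τ ρ)
  -- Part 2
  have part2 : ∀ p : ℕ → ℕ, p ∈ body S ↔ vSeq p ∈ body {τ : List Bool | wList τ ∈ S} := by
    intro p
    constructor
    · intro hp n
      have h2 : wList (List.ofFn fun i : Fin (sPart p n + 1) => vSeq p i) ∈ S := by
        rw [ofFn_vSeq_block, wList_vList]; exact hp (n + 1)
      obtain ⟨ρ, hρ⟩ := ofFn_f_prefix (fun k => vSeq p k) (show n ≤ sPart p n + 1 by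
        have := sPart_ge p n; omega)
      exact hcl _ h2 _ (hρ ▸ wList_prefix _ ρ)
    · intro hq m
      cases m with
      | zero => simpa using hempty
      | succ m =>
        have h := hq (sPart p m + 1)
        rwa [Set.mem_setOf_eq, ofFn_vSeq_block, wList_vList] at h
  -- Part 3
  have part3 : ∀ q ∈ body {τ : List Bool | wList τ ∈ S},
      {k : ℕ | q k = true}.Finite ∨ ∃ p ∈ body S, q = vSeq p := by
    intro q hq
    by_cases hfin : {k : ℕ | q k = true}.Finite
    · exact Or.inl hfin
    · right
      have hinf : (setOf fun k => q k = true).Infinite := hfin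
      set t := Nat.nth (fun k => q k = true) with ht
      set p : ℕ → ℕ := fun m => match m with | 0 => t 0 | (m + 1) => t (m + 1) - t m - 1 with hp
      have htmono : ∀ m, t m < t (m + 1) := fun m => (Nat.nth_lt_nth hinf).2 (Nat.lt_succ_self m)
      have hsp : ∀ m, sPart p m = t m := by
        intro m
        induction m with
        | zero => rw [sPart_zero]
        | succ m ih =>
          rw [sPart_succ, ih]
          show t m + (t (m + 1) - t m - 1) + 1 = t (m + 1)
          have := htmono m
          omega
      have hqv : q = vSeq p := by
        funext k
        rw [vSeq_eq]
        cases hqk : q k with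
        | false =>
          rw [eq_comm]; simp only [decide_eq_false_iff_not]
          rintro ⟨m, rfl⟩
          rw [hsp] at hqk
          have hmem := Nat.nth_mem_of_infinite hinf m
          rw [← ht] at hmem
          rw [hqk] at hmem
          exact Bool.false_ne_true hmem
        | true =>
          rw [eq_comm]; simp only [decide_eq_true_eq]
          have hk : k ∈ Set.range t := by
            rw [ht, Nat.range_nth_of_infinite hinf]; exact hqk
          obtain ⟨m, hm⟩ := hk
          exact ⟨m, by rw [hsp, hm]⟩
      exact ⟨p, (part2 p).mpr (hqv ▸ hq), hqv⟩
  -- Part 4 ingredients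
  have hinj : Function.Injective vSeq := by
    intro p q h
    have hrange : Set.range (sPart p) = Set.range (sPart q) := by
      ext k
      have hk := congrFun h k
      rw [vSeq_eq, vSeq_eq, decide_eq_decide] at hk
      simp only [Set.mem_range]
      constructor
      · rintro ⟨m, hm⟩; obtain ⟨m', hm'⟩ := hk.mp ⟨m, hm.symm⟩; exact ⟨m', hm'.symm⟩
      · rintro ⟨m, hm⟩; obtain ⟨m', hm'⟩ := hk.mpr ⟨m, hm.symm⟩; exact ⟨m', hm'.symm⟩
    have hs : sPart p = sPart q := ((sPart_strictMono p).range_inj (sPart_strictMono q)).mp hrange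
    funext m
    cases m with
    | zero =>
      have h0 := congrFun hs 0
      rwa [sPart_zero, sPart_zero] at h0
    | succ m =>
      have h1 := congrFun hs (m + 1)
      have h2 := congrFun hs m
      rw [sPart_succ, sPart_succ] at h1
      omega
  have hF : {q : ℕ → Bool | {k | q k = true}.Finite}.Countable := by
    have hsub : {q : ℕ → Bool | {k | q k = true}.Finite} ⊆
        Set.range (fun s : Finset ℕ => fun k => decide (k ∈ s)) := by
      intro q hq
      refine ⟨hq.toFinset, ?_⟩
      funext k
      cases h : q k <;> simp [Set.Finite.mem_toFinset, h]
    exact (Set.countable_range _).mono hsub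
  refine ⟨part1, part2, part3, ?_, ?_⟩
  · intro hT
    have hsub : body S ⊆ vSeq ⁻¹' body {τ : List Bool | wList τ ∈ S} :=
      fun p hp => (part2 p).mp hp
    exact (hT.preimage hinj).mono hsub
  · intro hCS
    have hsub : body {τ : List Bool | wList τ ∈ S} ⊆
        {q : ℕ → Bool | {k | q k = true}.Finite} ∪ vSeq '' body S := by
      intro q hq
      rcases part3 q hq with h | ⟨p, hp, rfl⟩
      · exact Or.inl h
      · exact Or.inr ⟨p, hp, rfl⟩
    exact (hF.union (hCS.image vSeq)).mono hsub
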